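/- Let G be a finite weighted graph with nonnegative symmetric weight matrix W_G, degree matrix D_G = diag(W_G 1), and Laplacian L_G = D_G - W_G. For a vertex subset V_S with degree submatrix T_S = D_G[V_S, V_S], boundary operator B = W_G[V_G∖V_S, V_S], boundary degree matrix T_S^δ = diag(B 1), define the Neumann Laplacian L_S^N = L_G[V_S,V_S] - Bᵀ (T_S^δ)⁻¹ B and R = I - T_S⁻¹ L_S^N. Then R 1 = 1, i.e., the all-ones vector is fixed by R. -/
import Mathlib


open Matrix

variable {S C : Type*} [Fintype S] [Fintype C] [DecidableEq S] [DecidableEq C]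

/-- Degree of a vertex in the ambient graph `G` on vertex set `S ⊕ C`
(`S` = landmark set `V_S`, `C` = the rest of the vertices). -/
noncomputable def deg (W : Matrix (S ⊕ C) (S ⊕ C) ℝ) (x : S ⊕ C) : ℝ := ∑ y, W x y

/-- `W_G[V_S, V_S]`. -/
noncomputable def Wss (W : Matrix (S ⊕ C) (S ⊕ C) ℝ) : Matrix S S ℝ :=
  fun i j => W (Sum.inl i) (Sum.inl j)

/-- The boundary operator `B = W_G[V_G \ V_S, V_S]`. -/
noncomputable def Bmat (W : Matrix (S ⊕ C) (S ⊕ C) ℝ) : Matrix C S ℝ :=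
  fun c s => W (Sum.inr c) (Sum.inl s)

/-- Boundary degree `∂d(c) = Σ_{s ∈ V_S} w(c,s)`. -/
noncomputable def bdeg (W : Matrix (S ⊕ C) (S ⊕ C) ℝ) (c : C) : ℝ := ∑ s, Bmat W c s

/-- `T_S = D_G[V_S, V_S]`. -/
noncomputable def TS (W : Matrix (S ⊕ C) (S ⊕ C) ℝ) : Matrix S S ℝ :=
  diagonal (fun s => deg W (Sum.inl s))

/-- `T_S⁻¹` (inverse of the positive diagonal matrix `T_S`). -/
noncomputable def TSinv (W : Matrix (S ⊕ C) (S ⊕ C) ℝ) : Matrix S S ℝ :=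
  diagonal (fun s => (deg W (Sum.inl s))⁻¹)

/-- `(T_S^δ)⁻¹` (inverse of the boundary degree matrix). -/
noncomputable def Tdinv (W : Matrix (S ⊕ C) (S ⊕ C) ℝ) : Matrix C C ℝ :=
  diagonal (fun c => (bdeg W c)⁻¹)

/-- The Neumann Laplacian `L_S^N = L_G[V_S,V_S] - Bᵀ (T_S^δ)⁻¹ B`,
where `L_G[V_S,V_S] = T_S - W_G[V_S,V_S]`. -/
noncomputable def LN (W : Matrix (S ⊕ C) (S ⊕ C) ℝ) : Matrix S S ℝ :=
  (TS W - Wss W) - (Bmat W)ᵀ * Tdinv W * Bmat W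

/-- `R = I - T_S⁻¹ L_S^N`. -/
noncomputable def Rmat (W : Matrix (S ⊕ C) (S ⊕ C) ℝ) : Matrix S S ℝ :=
  1 - TSinv W * LN W

/-- `R 1 = 1`. -/
theorem stmt_0 (W : Matrix (S ⊕ C) (S ⊕ C) ℝ) (hsym : W.IsSymm)
    (hnn : ∀ x y, 0 ≤ W x y)
    (hTS : ∀ s, deg W (Sum.inl s) ≠ 0) (hTd : ∀ c, bdeg W c ≠ 0) :
    Rmat W *ᵥ (fun _ => (1 : ℝ)) = fun _ => 1 := by
  have hLN : LN W *ᵥ (fun _ => (1 : ℝ)) = 0 := by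
    funext s
    have hdeg : deg W (Sum.inl s) = (∑ j, Wss W s j) + ∑ c, Bmat W c s := by
      have h : ∀ c : C, W (Sum.inl s) (Sum.inr c) = Bmat W c s := by
        intro c
        rw [Bmat, ← hsym.apply (Sum.inl s) (Sum.inr c)]
      simp [deg, Fintype.sum_sum_type, Wss, h]
    have hprod : ∀ j, ((Bmat W)ᵀ * Tdinv W * Bmat W) s j
        = ∑ c, Bmat W c s * (bdeg W c)⁻¹ * Bmat W c j := by
      intro j
      simp [Matrix.mul_apply, Tdinv, Matrix.diagonal, Finset.mul_sum, mul_assoc]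
    have hsum : ∑ j, ((Bmat W)ᵀ * Tdinv W * Bmat W) s j = ∑ c, Bmat W c s := by
      rw [Finset.sum_congr rfl (fun j _ => hprod j), Finset.sum_comm]
      refine Finset.sum_congr rfl (fun c _ => ?_)
      rw [← Finset.mul_sum]
      have hb : ∑ j, Bmat W c j = bdeg W c := rfl
      rw [hb, mul_assoc, inv_mul_cancel₀ (hTd c), mul_one]
    have : (LN W *ᵥ (fun _ => (1 : ℝ))) s
        = (deg W (Sum.inl s) - ∑ j, Wss W s j)
          - ∑ j, ((Bmat W)ᵀ * Tdinv W * Bmat W) s j := by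
      simp [LN, TS, Matrix.mulVec, dotProduct, Matrix.sub_apply,
        Finset.sum_sub_distrib, Matrix.diagonal]
    rw [this, hsum, hdeg]
    ring_nf
    simp
  have : Rmat W *ᵥ (fun _ => (1 : ℝ))
      = (fun _ => (1 : ℝ)) - TSinv W *ᵥ (LN W *ᵥ (fun _ => (1 : ℝ))) := by
    simp [Rmat, Matrix.sub_mulVec, Matrix.mulVec_mulVec]
  rw [this, hLN]
  simp
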